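/- Let X be a complex Banach space, Δ : S(c₀(Γ)) → S(X) a surjective isometry, n ∈ Γ, λ ∈ 𝕋, and φ ∈ X* a norm-one functional with φ⁻¹({1}) = Δ(A(n,λ)). Then φ(Δ(x)) = -1 for every x ∈ A(n,-λ). -/

import Mathlib

open ZeroAtInfty Metric

/-- The canonical basis vector `e n` of `c₀(Γ)`. -/
noncomputable def stdBasis {Γ : Type*} [TopologicalSpace Γ] [DiscreteTopology Γ] [DecidableEq Γ]
    (n : Γ) : C₀(Γ, ℂ) where
  toFun := fun k => if k = n then 1 else 0
  continuous_toFun := continuous_of_discreteTopology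
  zero_at_infty' := by
    have h : (fun k => if k = n then (1 : ℂ) else 0) =ᶠ[Filter.cocompact Γ] 0 := by
      refine Filter.mem_cocompact.2 ⟨{n}, isCompact_singleton, ?_⟩
      intro k hk
      simp only [Set.mem_compl_iff, Set.mem_singleton_iff] at hk
      simp [hk]
    exact Filter.Tendsto.congr' h.symm tendsto_const_nhds

section Aux

lemma prod_eq_aux {P Q P0 Q0 : ℝ} (hP0 : 0 < P0) (hQ0 : 0 < Q0) (hP : P ≤ P0) (hQ : Q ≤ Q0)
    (hPn : 0 ≤ P) (h : P0*Q0 ≤ P*Q) : P = P0 ∧ Q = Q0 := by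
  have hQpos : 0 < Q := by nlinarith
  have hPpos : 0 < P := by nlinarith
  have e1 : P*Q ≤ P*Q0 := mul_le_mul_of_nonneg_left hQ hPn
  have e2 : P*Q0 ≤ P0*Q0 := mul_le_mul_of_nonneg_right hP hQ0.le
  have e3 : P*Q ≤ P0*Q := mul_le_mul_of_nonneg_right hP hQpos.le
  have e4 : P0*Q ≤ P0*Q0 := mul_le_mul_of_nonneg_left hQ hP0.le
  constructor
  · have : P*Q0 = P0*Q0 := le_antisymm e2 (by nlinarith)
    exact mul_right_cancel₀ (ne_of_gt hQ0) this
  · have : P0*Q = P0*Q0 := le_antisymm e4 (by nlinarith)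
    exact mul_left_cancel₀ (ne_of_gt hP0) this

set_option maxHeartbeats 1000000 in
lemma plane_core (p q u1 u2 v1 v2 δ : ℝ) (hδ : 0 < δ)
    (h1 : p^2 + q^2 = 1) (h2 : (p+u1)^2 + (q+u2)^2 = 1)
    (h3 : (p+u1+v1)^2 + (q+u2+v2)^2 ≤ 1)
    (h4 : u1^2 + u2^2 ≤ δ^2/16) (h5 : v1^2 + v2^2 ≤ 9*δ^2/16)
    (h6 : (u1+v1)^2 + (u2+v2)^2 = δ^2) : False := by
  have hδ2 : 0 < δ^2 := by positivity
  have hdot : u1*v1 + u2*v2 ≥ 3*δ^2/16 := by nlinarith [h4, h5, h6]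
  have hCS : (u1*v1 + u2*v2)^2 ≤ (u1^2+u2^2)*(v1^2+v2^2) := by
    nlinarith [sq_nonneg (u1*v2 - u2*v1)]
  have hdotsq : (3*δ^2/16)^2 ≤ (u1*v1 + u2*v2)^2 := by
    have h0 : (0:ℝ) ≤ 3*δ^2/16 := by positivity
    exact pow_le_pow_left₀ h0 hdot 2
  have hPQ : (δ^2/16)*(9*δ^2/16) ≤ (u1^2+u2^2)*(v1^2+v2^2) := by
    calc (δ^2/16)*(9*δ^2/16) = (3*δ^2/16)^2 := by ring
    _ ≤ (u1*v1 + u2*v2)^2 := hdotsq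
    _ ≤ _ := hCS
  obtain ⟨hP, hQ⟩ := prod_eq_aux (by positivity) (by positivity) h4 h5 (by positivity) hPQ
  have hub : (u1*v1 + u2*v2)^2 ≤ (3*δ^2/16)^2 := by
    calc (u1*v1 + u2*v2)^2 ≤ (u1^2+u2^2)*(v1^2+v2^2) := hCS
      _ = (3*δ^2/16)^2 := by rw [hP, hQ]; ring
  have hdoteq : u1*v1 + u2*v2 = 3*δ^2/16 := by
    have hle : u1*v1 + u2*v2 ≤ 3*δ^2/16 := by nlinarith [hub, hdot, hδ2]
    linarith [hdot, hle]
  have hzero : (v1 - 3*u1)^2 + (v2 - 3*u2)^2 = 0 := by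
    have e : (v1 - 3*u1)^2 + (v2 - 3*u2)^2 = (v1^2+v2^2) - 6*(u1*v1+u2*v2) + 9*(u1^2+u2^2) := by ring
    rw [e, hP, hQ, hdoteq]; ring
  have hz1 : (v1 - 3*u1)^2 = 0 := by linarith [hzero, sq_nonneg (v1 - 3*u1), sq_nonneg (v2 - 3*u2)]
  have hz2 : (v2 - 3*u2)^2 = 0 := by linarith [hzero, sq_nonneg (v1 - 3*u1), sq_nonneg (v2 - 3*u2)]
  have hv1e : v1 = 3*u1 := by have := pow_eq_zero_iff (n := 2) (by norm_num) |>.mp hz1; linarith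
  have hv2e : v2 = 3*u2 := by have := pow_eq_zero_iff (n := 2) (by norm_num) |>.mp hz2; linarith
  have hlamA : 2*(p*u1 + q*u2) = -(δ^2/16) := by linear_combination h2 - h1 - hP
  rw [hv1e, hv2e] at h3
  have h3' : p^2+q^2 + 4*(2*(p*u1+q*u2)) + 16*(u1^2+u2^2) ≤ 1 := by
    calc p^2+q^2 + 4*(2*(p*u1+q*u2)) + 16*(u1^2+u2^2)
        = (p+u1+3*u1)^2 + (q+u2+3*u2)^2 := by ring
      _ ≤ 1 := h3
  rw [hlamA, hP] at h3'
  linarith [h3', h1, hδ2]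

lemma normsq_eq (ζ : ℂ) : ‖ζ‖^2 = ζ.re^2 + ζ.im^2 := by
  rw [Complex.sq_norm, Complex.normSq_apply]; ring

/-- No unit vector can lie strictly metrically between a unit vector and a disc point. -/
lemma no_unit_between (lam z w : ℂ) (δ : ℝ) (hδ : 0 < δ) (hlam : ‖lam‖ = 1) (hz : ‖z‖ = 1)
    (hw : ‖w‖ ≤ 1) (h1 : ‖z - lam‖ ≤ δ/4) (h2 : ‖w - z‖ ≤ 3*δ/4) (h3 : ‖w - lam‖ = δ) :
    False := by
  have e1 : lam.re^2 + lam.im^2 = 1 := by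
    have := normsq_eq lam; rw [hlam] at this; linarith [this]
  have e2 : z.re^2 + z.im^2 = 1 := by
    have := normsq_eq z; rw [hz] at this; linarith [this]
  have e3 : w.re^2 + w.im^2 ≤ 1 := by
    have h := normsq_eq w
    nlinarith [pow_le_pow_left₀ (norm_nonneg w) hw 2]
  have e4 : (z.re - lam.re)^2 + (z.im - lam.im)^2 ≤ δ^2/16 := by
    have h := normsq_eq (z - lam)
    simp only [Complex.sub_re, Complex.sub_im] at h
    nlinarith [pow_le_pow_left₀ (norm_nonneg (z - lam)) h1 2]
  have e5 : (w.re - z.re)^2 + (w.im - z.im)^2 ≤ 9*δ^2/16 := by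
    have h := normsq_eq (w - z)
    simp only [Complex.sub_re, Complex.sub_im] at h
    nlinarith [pow_le_pow_left₀ (norm_nonneg (w - z)) h2 2]
  have e6 : (w.re - lam.re)^2 + (w.im - lam.im)^2 = δ^2 := by
    have h := normsq_eq (w - lam)
    simp only [Complex.sub_re, Complex.sub_im] at h
    rw [h3] at h; linarith [h]
  refine plane_core lam.re lam.im (z.re - lam.re) (z.im - lam.im) (w.re - z.re) (w.im - z.im) δ hδ
    e1 ?_ ?_ e4 e5 ?_
  · linear_combination e2
  · calc (lam.re + (z.re - lam.re) + (w.re - z.re))^2 + (lam.im + (z.im - lam.im) + (w.im - z.im))^2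
        = w.re^2 + w.im^2 := by ring
      _ ≤ 1 := e3
  · linear_combination e6

/-- Two complex numbers in the closed unit disc summing to `2` are both `1`. -/
lemma eq_one_of_add_eq_two {a b : ℂ} (ha : ‖a‖ ≤ 1) (hb : ‖b‖ ≤ 1) (hab : a + b = 2) :
    a = 1 ∧ b = 1 := by
  have hra : a.re ≤ 1 := le_trans (Complex.re_le_norm a) ha
  have hrb : b.re ≤ 1 := le_trans (Complex.re_le_norm b) hb
  have hsum : a.re + b.re = 2 := by
    have := congrArg Complex.re hab
    simpa using this
  have hra1 : a.re = 1 := by linarith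
  have hrb1 : b.re = 1 := by linarith
  have hia : a.im = 0 := by
    have h2 : a.re ^ 2 + a.im ^ 2 ≤ 1 := by
      rw [← normsq_eq]; nlinarith [norm_nonneg a]
    nlinarith [sq_nonneg a.im]
  have hib : b.im = 0 := by
    have h2 : b.re ^ 2 + b.im ^ 2 ≤ 1 := by
      rw [← normsq_eq]; nlinarith [norm_nonneg b]
    nlinarith [sq_nonneg b.im]
  constructor <;> apply Complex.ext <;> simp [hra1, hrb1, hia, hib]

lemma c0_norm_le {Γ : Type*} [TopologicalSpace Γ] {f : C₀(Γ, ℂ)} {C : ℝ} (hC : 0 ≤ C)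
    (h : ∀ k, ‖f k‖ ≤ C) : ‖f‖ ≤ C := by
  rw [← ZeroAtInftyContinuousMap.norm_toBCF_eq_norm]
  exact (BoundedContinuousFunction.norm_le hC).mpr h

lemma c0_apply_le_norm {Γ : Type*} [TopologicalSpace Γ] (f : C₀(Γ, ℂ)) (k : Γ) :
    ‖f k‖ ≤ ‖f‖ := by
  rw [← ZeroAtInftyContinuousMap.norm_toBCF_eq_norm]
  exact f.toBCF.norm_coe_le_norm k

/-- The "radial retraction towards the face": set coordinate `n` to `lam` and pull every
other coordinate radially towards `0` by `δ`. -/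
noncomputable def tweak {Γ : Type*} [TopologicalSpace Γ] [DiscreteTopology Γ] [DecidableEq Γ]
    (u : C₀(Γ, ℂ)) (n : Γ) (lam : ℂ) (δ : ℝ) (hδ : 0 < δ) : C₀(Γ, ℂ) where
  toFun := fun k => if k = n then lam else
    (if ‖u k‖ ≤ δ then 0 else ((1 - δ/‖u k‖ : ℝ) : ℂ) * u k)
  continuous_toFun := continuous_of_discreteTopology
  zero_at_infty' := by
    apply squeeze_zero_norm' (a := fun k => ‖u k‖)
    · refine Filter.mem_cocompact.2 ⟨{n}, isCompact_singleton, ?_⟩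
      intro k hk
      simp only [Set.mem_compl_iff, Set.mem_singleton_iff] at hk
      simp only [Set.mem_setOf_eq, if_neg hk]
      split_ifs with h
      · simpa using norm_nonneg (u k)
      · push_neg at h
        have hr : 0 < ‖u k‖ := lt_trans hδ h
        have hfac : 0 ≤ 1 - δ/‖u k‖ := by
          have : δ/‖u k‖ ≤ 1 := (div_le_one hr).mpr h.le
          linarith
        have hfac1 : 1 - δ/‖u k‖ ≤ 1 := by
          have : 0 ≤ δ/‖u k‖ := by positivity
          linarith
        rw [norm_mul, Complex.norm_real, Real.norm_eq_abs, abs_of_nonneg hfac]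
        nlinarith [norm_nonneg (u k)]
    · simpa using (zero_at_infty (f := u) (α := Γ)).norm

end Aux

/-- If `φ` is a norm-one functional whose face `{φ = 1}` on the sphere equals the image of
`A(n,λ)` under a surjective isometry `Δ`, then `φ(Δ x) = -1` for all `x ∈ A(n,-λ)`. -/
theorem supp_on_antipodal_face {Γ : Type*} [TopologicalSpace Γ] [DiscreteTopology Γ]
    [DecidableEq Γ] [Infinite Γ]
    {X : Type*} [NormedAddCommGroup X] [NormedSpace ℂ X] [CompleteSpace X]
    (Δ : sphere (0 : C₀(Γ, ℂ)) 1 → sphere (0 : X) 1)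
    (hΔiso : Isometry Δ) (hΔsurj : Function.Surjective Δ)
    (n : Γ) (lam : ℂ) (hlam : ‖lam‖ = 1)
    (φ : X →L[ℂ] ℂ) (hφ : ‖φ‖ = 1)
    (hface : {z : X | ‖z‖ = 1 ∧ φ z = 1} =
      (fun w : sphere (0 : X) 1 => (w : X)) ''
        (Δ '' {x : sphere (0 : C₀(Γ, ℂ)) 1 | (x : C₀(Γ, ℂ)) n = lam})) :
    ∀ x : sphere (0 : C₀(Γ, ℂ)) 1, (x : C₀(Γ, ℂ)) n = -lam → φ (Δ x) = -1 := by
  intro x hx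
  have hxnorm : ‖(↑x : C₀(Γ, ℂ))‖ = 1 := mem_sphere_zero_iff_norm.mp x.2
  have hΔxnorm : ‖(↑(Δ x) : X)‖ = 1 := mem_sphere_zero_iff_norm.mp (Δ x).2
  have hmem : -(↑(Δ x) : X) ∈ sphere (0 : X) 1 := by
    rw [mem_sphere_zero_iff_norm, norm_neg]; exact hΔxnorm
  obtain ⟨u, hu⟩ := hΔsurj ⟨-(↑(Δ x) : X), hmem⟩
  have huX : (↑(Δ u) : X) = -(↑(Δ x) : X) := by rw [hu]
  have hunorm : ‖(↑u : C₀(Γ, ℂ))‖ = 1 := mem_sphere_zero_iff_norm.mp u.2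
  have hun_le : ‖(↑u : C₀(Γ, ℂ)) n‖ ≤ 1 :=
    le_trans (c0_apply_le_norm _ n) (le_of_eq hunorm)
  -- The key claim: the preimage of `-Δx` lies in `A(n,lam)`.
  have hun : (↑u : C₀(Γ, ℂ)) n = lam := by
    by_contra hne
    set δ : ℝ := ‖(↑u : C₀(Γ, ℂ)) n - lam‖ with hδdef
    have hδpos : 0 < δ := norm_pos_iff.mpr (sub_ne_zero_of_ne hne)
    have hδle2 : δ ≤ 2 := by
      calc δ ≤ ‖(↑u : C₀(Γ, ℂ)) n‖ + ‖lam‖ := norm_sub_le _ _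
        _ ≤ 2 := by rw [hlam]; linarith
    set yf := tweak (↑u : C₀(Γ, ℂ)) n lam δ hδpos with hyf
    have hyfn : yf n = lam := by simp [hyf, tweak]
    have hyfk : ∀ k, k ≠ n → yf k =
        (if ‖(↑u : C₀(Γ, ℂ)) k‖ ≤ δ then 0
          else ((1 - δ/‖(↑u : C₀(Γ, ℂ)) k‖ : ℝ) : ℂ) * (↑u : C₀(Γ, ℂ)) k) := by
      intro k hk; simp [hyf, tweak, hk]
    have hretr : ∀ k, k ≠ n → ¬ (‖(↑u : C₀(Γ, ℂ)) k‖ ≤ δ) →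
        ‖yf k‖ = ‖(↑u : C₀(Γ, ℂ)) k‖ - δ := by
      intro k hk h
      push_neg at h
      have hr : 0 < ‖(↑u : C₀(Γ, ℂ)) k‖ := lt_trans hδpos h
      have hfac : 0 ≤ 1 - δ/‖(↑u : C₀(Γ, ℂ)) k‖ := by
        have : δ/‖(↑u : C₀(Γ, ℂ)) k‖ ≤ 1 := (div_le_one hr).mpr h.le
        linarith
      have hne' : ‖(↑u : C₀(Γ, ℂ)) k‖ ≠ 0 := ne_of_gt hr
      rw [hyfk k hk, if_neg (not_le.mpr h), norm_mul, Complex.norm_real, Real.norm_eq_abs,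
        abs_of_nonneg hfac, sub_mul, one_mul, div_mul_cancel₀ _ hne']
    have hdiff : ∀ k, ‖(↑u : C₀(Γ, ℂ)) k - yf k‖ ≤ δ := by
      intro k
      by_cases hk : k = n
      · subst hk; rw [hyfn]
      · rw [hyfk k hk]
        split_ifs with h
        · simpa using h
        · push_neg at h
          have hr : 0 < ‖(↑u : C₀(Γ, ℂ)) k‖ := lt_trans hδpos h
          have e : (↑u : C₀(Γ, ℂ)) k - ((1 - δ/‖(↑u : C₀(Γ, ℂ)) k‖ : ℝ) : ℂ) * (↑u : C₀(Γ, ℂ)) k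
              = ((δ/‖(↑u : C₀(Γ, ℂ)) k‖ : ℝ) : ℂ) * (↑u : C₀(Γ, ℂ)) k := by
            push_cast; ring
          rw [e, norm_mul, Complex.norm_real, Real.norm_eq_abs, abs_of_nonneg (by positivity),
            div_mul_cancel₀ _ (ne_of_gt hr)]
    have hyf_norm : ‖yf‖ = 1 := by
      apply le_antisymm
      · apply c0_norm_le zero_le_one
        intro k
        by_cases hk : k = n
        · subst hk; rw [hyfn, hlam]
        · rw [hyfk k hk]
          split_ifs with h
          · simp
          · push_neg at h
            have hr : 0 < ‖(↑u : C₀(Γ, ℂ)) k‖ := lt_trans hδpos h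
            have huk1 : ‖(↑u : C₀(Γ, ℂ)) k‖ ≤ 1 :=
              le_trans (c0_apply_le_norm _ k) (le_of_eq hunorm)
            have := hretr k hk (not_le.mpr h)
            rw [hyfk k hk, if_neg (not_le.mpr h)] at this
            rw [this]; linarith
      · have h1 := c0_apply_le_norm yf n
        rw [hyfn, hlam] at h1; exact h1
    have h_uy : ‖(↑u : C₀(Γ, ℂ)) - yf‖ = δ := by
      apply le_antisymm
      · apply c0_norm_le hδpos.le
        intro k
        rw [ZeroAtInftyContinuousMap.sub_apply]
        exact hdiff k
      · have h1 := c0_apply_le_norm ((↑u : C₀(Γ, ℂ)) - yf) n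
        rw [ZeroAtInftyContinuousMap.sub_apply, hyfn] at h1
        exact h1
    have h_xy : ‖yf - (↑x : C₀(Γ, ℂ))‖ = 2 := by
      apply le_antisymm
      · calc ‖yf - (↑x : C₀(Γ, ℂ))‖ ≤ ‖yf‖ + ‖(↑x : C₀(Γ, ℂ))‖ := norm_sub_le _ _
          _ = 2 := by rw [hyf_norm, hxnorm]; norm_num
      · have h1 := c0_apply_le_norm (yf - (↑x : C₀(Γ, ℂ))) n
        rw [ZeroAtInftyContinuousMap.sub_apply, hyfn, hx] at h1
        have e : lam - -lam = (2 : ℂ) * lam := by ring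
        rw [e, norm_mul, hlam] at h1
        simpa using h1
    set y' : sphere (0 : C₀(Γ, ℂ)) 1 := ⟨yf, mem_sphere_zero_iff_norm.mpr hyf_norm⟩ with hy'
    have hdist_iso : ∀ a b : sphere (0 : C₀(Γ, ℂ)) 1,
        ‖(↑(Δ a) : X) - ↑(Δ b)‖ = ‖(↑a : C₀(Γ, ℂ)) - ↑b‖ := by
      intro a b
      rw [← dist_eq_norm, ← dist_eq_norm, ← Subtype.dist_eq, ← Subtype.dist_eq]
      exact hΔiso.dist_eq a b
    have hsum2 : ‖(↑(Δ y') : X) + ↑(Δ u)‖ = 2 := by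
      rw [huX, ← sub_eq_add_neg, hdist_iso y' x]
      exact h_xy
    have hne0 : (↑(Δ y') : X) + ↑(Δ u) ≠ 0 := by
      intro h; rw [h, norm_zero] at hsum2; norm_num at hsum2
    obtain ⟨ψ, hψ1, hψ2⟩ := exists_dual_vector ℂ _ (norm_ne_zero_iff.mpr hne0)
    rw [hsum2] at hψ2
    have hψbound : ∀ w : sphere (0 : X) 1, ‖ψ (↑w : X)‖ ≤ 1 := by
      intro w
      calc ‖ψ (↑w : X)‖ ≤ ‖ψ‖ * ‖(↑w : X)‖ := ψ.le_opNorm _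
        _ = 1 := by rw [hψ1, mem_sphere_zero_iff_norm.mp w.2]; norm_num
    obtain ⟨hψy, hψu⟩ := eq_one_of_add_eq_two (hψbound (Δ y')) (hψbound (Δ u))
      (by rw [← map_add, hψ2]; norm_num)
    set p : X := (3/4 : ℂ) • (↑(Δ y') : X) + (1/4 : ℂ) • (↑(Δ u) : X) with hp
    have hn34 : ‖(3/4 : ℂ)‖ = 3/4 := by
      rw [show (3/4 : ℂ) = ((3/4 : ℝ) : ℂ) by norm_num, Complex.norm_real]; norm_num
    have hn14 : ‖(1/4 : ℂ)‖ = 1/4 := by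
      rw [show (1/4 : ℂ) = ((1/4 : ℝ) : ℂ) by norm_num, Complex.norm_real]; norm_num
    have hψp : ψ p = 1 := by
      rw [hp, map_add, map_smul, map_smul, hψy, hψu, smul_eq_mul, smul_eq_mul]
      norm_num
    have hpnorm : ‖p‖ = 1 := by
      apply le_antisymm
      · calc ‖p‖ ≤ ‖(3/4 : ℂ) • (↑(Δ y') : X)‖ + ‖(1/4 : ℂ) • (↑(Δ u) : X)‖ := norm_add_le _ _
          _ = 3/4 * ‖(↑(Δ y') : X)‖ + 1/4 * ‖(↑(Δ u) : X)‖ := by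
              rw [norm_smul, norm_smul, hn34, hn14]
          _ = 1 := by
              rw [mem_sphere_zero_iff_norm.mp (Δ y').2, mem_sphere_zero_iff_norm.mp (Δ u).2]
              norm_num
      · have : (1 : ℝ) = ‖ψ p‖ := by rw [hψp]; norm_num
        rw [this]
        calc ‖ψ p‖ ≤ ‖ψ‖ * ‖p‖ := ψ.le_opNorm _
          _ = ‖p‖ := by rw [hψ1, one_mul]
    obtain ⟨v, hv⟩ := hΔsurj ⟨p, mem_sphere_zero_iff_norm.mpr hpnorm⟩
    have hvX : (↑(Δ v) : X) = p := by rw [hv]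
    have hv_norm : ‖(↑v : C₀(Γ, ℂ))‖ = 1 := mem_sphere_zero_iff_norm.mp v.2
    have hvy : ‖(↑v : C₀(Γ, ℂ)) - yf‖ = δ/4 := by
      have e : p - (↑(Δ y') : X) = (1/4 : ℂ) • ((↑(Δ u) : X) - ↑(Δ y')) := by
        rw [hp]; module
      have h1 : ‖(↑v : C₀(Γ, ℂ)) - yf‖ = ‖p - (↑(Δ y') : X)‖ := by
        rw [← hvX, hdist_iso v y']
      rw [h1, e, norm_smul, hn14, hdist_iso u y', h_uy]
      ring
    have hvu : ‖(↑v : C₀(Γ, ℂ)) - ↑u‖ = 3*δ/4 := by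
      have e : p - (↑(Δ u) : X) = (3/4 : ℂ) • ((↑(Δ y') : X) - ↑(Δ u)) := by
        rw [hp]; module
      have h1 : ‖(↑v : C₀(Γ, ℂ)) - ↑u‖ = ‖p - (↑(Δ u) : X)‖ := by
        rw [← hvX, hdist_iso v u]
      have h2 : ‖(↑(Δ y') : X) - ↑(Δ u)‖ = δ := by
        rw [hdist_iso y' u, ← norm_sub_rev]
        exact h_uy
      rw [h1, e, norm_smul, hn34, h2]
      ring
    have hvyk : ∀ k, ‖(↑v : C₀(Γ, ℂ)) k - yf k‖ ≤ δ/4 := by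
      intro k
      have h1 := c0_apply_le_norm ((↑v : C₀(Γ, ℂ)) - yf) k
      rw [ZeroAtInftyContinuousMap.sub_apply, hvy] at h1
      exact h1
    have hvuk : ∀ k, ‖(↑v : C₀(Γ, ℂ)) k - (↑u : C₀(Γ, ℂ)) k‖ ≤ 3*δ/4 := by
      intro k
      have h1 := c0_apply_le_norm ((↑v : C₀(Γ, ℂ)) - (↑u : C₀(Γ, ℂ))) k
      rw [ZeroAtInftyContinuousMap.sub_apply, hvu] at h1
      exact h1
    have hvk : ∀ k, k ≠ n → ‖(↑v : C₀(Γ, ℂ)) k‖ ≤ max (1/2 : ℝ) (1 - 3*δ/4) := by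
      intro k hk
      have h1 := hvyk k
      have h2 : ‖(↑v : C₀(Γ, ℂ)) k‖ ≤ δ/4 + ‖yf k‖ := by
        calc ‖(↑v : C₀(Γ, ℂ)) k‖ = ‖((↑v : C₀(Γ, ℂ)) k - yf k) + yf k‖ := by ring_nf
          _ ≤ ‖(↑v : C₀(Γ, ℂ)) k - yf k‖ + ‖yf k‖ := norm_add_le _ _
          _ ≤ δ/4 + ‖yf k‖ := by linarith
      by_cases h : ‖(↑u : C₀(Γ, ℂ)) k‖ ≤ δ
      · have hy0 : yf k = 0 := by rw [hyfk k hk, if_pos h]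
        rw [hy0, norm_zero] at h2
        refine le_trans ?_ (le_max_left _ _)
        linarith
      · have huk1 : ‖(↑u : C₀(Γ, ℂ)) k‖ ≤ 1 :=
          le_trans (c0_apply_le_norm _ k) (le_of_eq hunorm)
        have := hretr k hk h
        rw [this] at h2
        refine le_trans ?_ (le_max_right _ _)
        linarith
    have hmax : max (1/2 : ℝ) (1 - 3*δ/4) < 1 := max_lt (by norm_num) (by linarith)
    have hvn : ‖(↑v : C₀(Γ, ℂ)) n‖ = 1 := by
      have hb : ‖(↑v : C₀(Γ, ℂ))‖ ≤ max (‖(↑v : C₀(Γ, ℂ)) n‖) (max (1/2 : ℝ) (1 - 3*δ/4)) := by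
        apply c0_norm_le (le_trans (norm_nonneg _) (le_max_left _ _))
        intro k
        by_cases hk : k = n
        · subst hk; exact le_max_left _ _
        · exact le_trans (hvk k hk) (le_max_right _ _)
      rw [hv_norm] at hb
      rcases le_max_iff.mp hb with h | h
      · exact le_antisymm (le_trans (c0_apply_le_norm _ n) (le_of_eq hv_norm)) h
      · linarith
    refine no_unit_between lam ((↑v : C₀(Γ, ℂ)) n) ((↑u : C₀(Γ, ℂ)) n) δ hδpos hlam hvn hun_le
      ?_ ?_ rfl
    · have := hvyk n; rwa [hyfn] at this
    · rw [norm_sub_rev]; exact hvuk n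
  -- Conclusion: `-Δx` lies in the face, so `φ(Δx) = -1`.
  have hmem2 : -(↑(Δ x) : X) ∈ {z : X | ‖z‖ = 1 ∧ φ z = 1} := by
    rw [hface]
    exact ⟨Δ u, ⟨u, hun, rfl⟩, huX⟩
  have hφ1 : φ (-(↑(Δ x) : X)) = 1 := hmem2.2
  rw [map_neg] at hφ1
  exact neg_eq_iff_eq_neg.mp hφ1
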